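/- Let (z_n)_{n≥1} be a stationary sequence of nonnegative real random variables on a probability space, i.e., for all k, n the joint law of (z_{1+k}, …, z_{n+k}) equals the joint law of (z_1, …, z_n). If E[log(1 + z_1)] < ∞, then (1/k) log(1 + z_1 + ⋯ + z_k) → 0 as k → ∞, both almost surely and in L¹. -/

import Mathlib

open MeasureTheory Filter

namespace Stmt6

private lemma tendsto_log_add_div (c : ℝ) :
    Tendsto (fun k : ℕ => Real.log (c + k) / k) atTop (nhds 0) := by
  have h1 : Tendsto (fun y : ℝ => Real.log y / y) atTop (nhds 0) :=
    Real.isLittleO_log_id_atTop.tendsto_div_nhds_zero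
  have h2 : Tendsto (fun x : ℝ => c + x) atTop atTop :=
    tendsto_atTop_add_const_left _ _ tendsto_id
  have h3 : Tendsto (fun x : ℝ => Real.log (c + x) / (c + x)) atTop (nhds 0) :=
    h1.comp h2
  have h4 : Tendsto (fun x : ℝ => (c + x) / x) atTop (nhds 1) := by
    have : Tendsto (fun x : ℝ => c / x + 1) atTop (nhds (0 + 1)) :=
      (tendsto_const_nhds.div_atTop tendsto_id).add tendsto_const_nhds
    simp only [zero_add] at this
    refine this.congr' ?_
    filter_upwards [eventually_ne_atTop (0:ℝ)] with x hx
    field_simp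
  have h5 : Tendsto (fun x : ℝ => Real.log (c + x) / x) atTop (nhds 0) := by
    have := h3.mul h4
    simp only [zero_mul] at this
    refine this.congr' ?_
    filter_upwards [eventually_ne_atTop (0:ℝ), h2.eventually_ne_atTop 0] with x hx hcx
    field_simp
  exact h5.comp tendsto_natCast_atTop_atTop

/-- Key pointwise inequality. -/
private lemma key_ineq (b : ℕ → ℝ) (hb : ∀ i, 0 ≤ b i) (k : ℕ) (C : ℝ) (hC : 0 ≤ C) :
    Real.log (1 + ∑ i ∈ Finset.range k, b i)
      ≤ Real.log (k + 1) + C + ∑ i ∈ Finset.range k, max (Real.log (1 + b i) - C) 0 := by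
  set T := ∑ i ∈ Finset.range k, max (Real.log (1 + b i) - C) 0 with hT
  have hT0 : 0 ≤ T := Finset.sum_nonneg fun i _ => le_max_right _ _
  have hbound : ∀ i ∈ Finset.range k, b i ≤ Real.exp (C + T) := by
    intro i hi
    have h1 : Real.log (1 + b i) ≤ C + T := by
      have : Real.log (1 + b i) - C ≤ T :=
        le_trans (le_max_left _ _)
          (Finset.single_le_sum (f := fun j => max (Real.log (1 + b j) - C) 0)
            (fun j _ => le_max_right _ _) hi)
      linarith
    have h2 : 1 + b i ≤ Real.exp (C + T) := by
      have := Real.exp_le_exp.2 h1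
      rwa [Real.exp_log (by linarith [hb i])] at this
    linarith
  have hsum : (1 : ℝ) + ∑ i ∈ Finset.range k, b i ≤ (k + 1) * Real.exp (C + T) := by
    have h1 : ∑ i ∈ Finset.range k, b i ≤ k * Real.exp (C + T) := by
      calc ∑ i ∈ Finset.range k, b i ≤ ∑ _i ∈ Finset.range k, Real.exp (C + T) :=
            Finset.sum_le_sum hbound
        _ = k * Real.exp (C + T) := by simp [mul_comm]
    have h2 : (1:ℝ) ≤ Real.exp (C + T) := Real.one_le_exp (by linarith)
    nlinarith
  calc Real.log (1 + ∑ i ∈ Finset.range k, b i) ≤ Real.log ((k + 1) * Real.exp (C + T)) := by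
        refine Real.log_le_log ?_ hsum
        have := Finset.sum_nonneg (fun i (_ : i ∈ Finset.range k) => hb i)
        linarith
    _ = Real.log (k + 1) + C + T := by
        rw [Real.log_mul (by positivity) (Real.exp_ne_zero _), Real.log_exp]; ring

/-- Deterministic almost-sure lemma. -/
private lemma det_as (b : ℕ → ℝ) (hb : ∀ i, 0 ≤ b i)
    (h : ∀ ε : ℝ, 0 < ε → ∀ᶠ n in atTop, Real.log (1 + b n) ≤ ε * n) :
    Tendsto (fun k : ℕ => Real.log (1 + ∑ i ∈ Finset.range k, b i) / k) atTop (nhds 0) := by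
  rw [NormedAddCommGroup.tendsto_nhds_zero]
  intro ε hε
  obtain ⟨N, hN⟩ := (h (ε / 2) (by linarith)).exists_forall_of_atTop
  set B : ℝ := ∑ i ∈ Finset.range N, b i with hB
  have hB0 : 0 ≤ B := Finset.sum_nonneg fun i _ => hb i
  have hlog := tendsto_log_add_div (1 + B)
  rw [NormedAddCommGroup.tendsto_nhds_zero] at hlog
  filter_upwards [hlog (ε / 2) (by linarith), eventually_ge_atTop (N + 1)] with k hk hkN
  have hk1 : (1:ℕ) ≤ k := le_trans (Nat.le_add_left 1 N) hkN
  have hkpos : (0:ℝ) < k := by exact_mod_cast hk1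
  have hS0 : 0 ≤ ∑ i ∈ Finset.range k, b i := Finset.sum_nonneg fun i _ => hb i
  have hexp1 : (1:ℝ) ≤ Real.exp (ε / 2 * k) := Real.one_le_exp (by positivity)
  have hsum : ∑ i ∈ Finset.range k, b i ≤ B + k * Real.exp (ε / 2 * k) := by
    have hsplit : Finset.range k = Finset.range N ∪ Finset.Ico N k := by
      rw [Finset.range_eq_Ico, Finset.range_eq_Ico,
        Finset.Ico_union_Ico_eq_Ico (Nat.zero_le N) (show N ≤ k by omega)]
    rw [hsplit, Finset.sum_union (by
      simp only [Finset.disjoint_left, Finset.mem_Ico, Finset.mem_range]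
      omega)]
    have htail : ∑ i ∈ Finset.Ico N k, b i ≤ (Finset.Ico N k).card • Real.exp (ε / 2 * k) := by
      apply Finset.sum_le_card_nsmul
      intro i hi
      obtain ⟨hi1, hi2⟩ := Finset.mem_Ico.1 hi
      have h1 : Real.log (1 + b i) ≤ ε / 2 * i := hN i hi1
      have h2 : 1 + b i ≤ Real.exp (ε / 2 * i) := by
        have := Real.exp_le_exp.2 h1
        rwa [Real.exp_log (by linarith [hb i])] at this
      have h3 : Real.exp (ε / 2 * i) ≤ Real.exp (ε / 2 * k) := by
        apply Real.exp_le_exp.2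
        have : (i:ℝ) ≤ k := by exact_mod_cast hi2.le
        nlinarith
      linarith
    have hcard : ((Finset.Ico N k).card : ℝ) ≤ k := by
      rw [Nat.card_Ico]; exact_mod_cast Nat.sub_le k N
    rw [nsmul_eq_mul] at htail
    have : ((Finset.Ico N k).card : ℝ) * Real.exp (ε / 2 * k) ≤ k * Real.exp (ε / 2 * k) :=
      mul_le_mul_of_nonneg_right hcard (Real.exp_nonneg _)
    linarith
  have hlogb : Real.log (1 + ∑ i ∈ Finset.range k, b i)
      ≤ Real.log (1 + B + k) + ε / 2 * k := by
    calc Real.log (1 + ∑ i ∈ Finset.range k, b i)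
        ≤ Real.log ((1 + B + k) * Real.exp (ε / 2 * k)) := by
          apply Real.log_le_log (by linarith)
          nlinarith
      _ = Real.log (1 + B + k) + ε / 2 * k := by
          rw [Real.log_mul (by positivity) (Real.exp_ne_zero _), Real.log_exp]
  have hf0 : 0 ≤ Real.log (1 + ∑ i ∈ Finset.range k, b i) / k := by
    apply div_nonneg _ hkpos.le
    apply Real.log_nonneg; linarith
  rw [Real.norm_eq_abs, abs_of_nonneg hf0]
  rw [Real.norm_eq_abs] at hk
  have hk' : Real.log (1 + B + k) / k < ε / 2 := lt_of_abs_lt hk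
  have : Real.log (1 + ∑ i ∈ Finset.range k, b i) / k ≤ Real.log (1 + B + k) / k + ε / 2 := by
    rw [div_add' _ _ _ hkpos.ne', div_le_div_iff_of_pos_right hkpos] at *
    linarith
  linarith

/-- Let `(z_n)` be a stationary sequence of nonnegative real random variables (indexed here from
`0`, so `z 0` plays the role of `z_1`).  If `E[log(1 + z_1)] < ∞`, then
`(1/k)·log(1 + z_1 + ⋯ + z_k) → 0` as `k → ∞`, both almost surely and in `L¹`. -/
theorem log_one_add_sum_div_tendsto_zero
    {Ω : Type*} [MeasurableSpace Ω] (P : Measure Ω) [IsProbabilityMeasure P]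
    (z : ℕ → Ω → ℝ) (hzm : ∀ n, Measurable (z n)) (hz0 : ∀ n ω, 0 ≤ z n ω)
    (hstat : ∀ k n : ℕ,
      Measure.map (fun ω => fun i : Fin n => z (i + k) ω) P
        = Measure.map (fun ω => fun i : Fin n => z i ω) P)
    (hint : Integrable (fun ω => Real.log (1 + z 0 ω)) P) :
    (∀ᵐ ω ∂P, Tendsto
        (fun k : ℕ => Real.log (1 + ∑ i ∈ Finset.range k, z i ω) / k) atTop (nhds 0)) ∧
    (∀ k : ℕ, Integrable
        (fun ω => Real.log (1 + ∑ i ∈ Finset.range k, z i ω) / k) P) ∧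
    Tendsto (fun k : ℕ =>
        ∫ ω, |Real.log (1 + ∑ i ∈ Finset.range k, z i ω) / k| ∂P) atTop (nhds 0) := by
  -- notation
  set Y : ℕ → Ω → ℝ := fun n ω => Real.log (1 + z n ω) with hYdef
  have hYm : ∀ n, Measurable (Y n) :=
    fun n => Real.measurable_log.comp (measurable_const.add (hzm n))
  have hY0 : ∀ n ω, 0 ≤ Y n ω := fun n ω => Real.log_nonneg (by linarith [hz0 n ω])
  -- identical distributions
  have hmap : ∀ n, Measure.map (z n) P = Measure.map (z 0) P := by
    intro n
    have h := hstat n 1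
    have h0 := congrArg (Measure.map (fun f : Fin 1 → ℝ => f 0)) h
    rw [Measure.map_map (measurable_pi_apply 0)
        (measurable_pi_lambda _ fun i => hzm _),
      Measure.map_map (measurable_pi_apply 0)
        (measurable_pi_lambda _ fun i => hzm _)] at h0
    simpa [Function.comp_def] using h0
  have hYmap : ∀ n, Measure.map (Y n) P = Measure.map (Y 0) P := by
    intro n
    have hφ : Measurable (fun x : ℝ => Real.log (1 + x)) :=
      Real.measurable_log.comp (measurable_const.add measurable_id)
    have e1 : Measure.map (Y n) P
        = Measure.map (fun x : ℝ => Real.log (1 + x)) (Measure.map (z n) P) :=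
      (Measure.map_map hφ (hzm n)).symm
    have e2 : Measure.map (Y 0) P
        = Measure.map (fun x : ℝ => Real.log (1 + x)) (Measure.map (z 0) P) :=
      (Measure.map_map hφ (hzm 0)).symm
    rw [e1, e2, hmap n]
  have hYint : ∀ n, Integrable (Y n) P := by
    intro n
    have hφ : Measurable (fun x : ℝ => Real.log (1 + x)) :=
      Real.measurable_log.comp (measurable_const.add measurable_id)
    have h1 : Integrable (fun x : ℝ => Real.log (1 + x)) (Measure.map (z 0) P) := by
      rw [integrable_map_measure hφ.aestronglyMeasurable (hzm 0).aemeasurable]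
      exact hint
    rw [← hmap n] at h1
    exact (integrable_map_measure hφ.aestronglyMeasurable (hzm n).aemeasurable).1 h1
  -- measure transfer for upper level sets
  have hlevel : ∀ (n : ℕ) (t : ℝ), P {ω | t < Y n ω} = P {ω | t < Y 0 ω} := by
    intro n t
    have e1 : P {ω | t < Y n ω} = Measure.map (Y n) P (Set.Ioi t) := by
      rw [Measure.map_apply (hYm n) measurableSet_Ioi]; rfl
    have e2 : P {ω | t < Y 0 ω} = Measure.map (Y 0) P (Set.Ioi t) := by
      rw [Measure.map_apply (hYm 0) measurableSet_Ioi]; rfl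
    rw [e1, e2, hYmap n]
  -- Borel–Cantelli: a.e., eventually `Y n ≤ ε n` for each `ε = 1/(m+1)`
  have hBC : ∀ m : ℕ, ∀ᵐ ω ∂P, ∀ᶠ n in atTop, Y n ω ≤ (1 / (m + 1) : ℝ) * n := by
    intro m
    set ε : ℝ := 1 / (m + 1) with hε
    have hεpos : 0 < ε := by positivity
    have hfin : (∑' n : ℕ, P {ω | ε * n < Y n ω}) ≠ ⊤ := by
      have hconv : ∀ n : ℕ, P {ω | ε * n < Y n ω} = P {ω | Y 0 ω / ε ∈ Set.Ioi (n : ℝ)} := by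
        intro n
        rw [hlevel n]
        congr 1
        ext ω
        simp only [Set.mem_setOf_eq, Set.mem_Ioi]
        rw [lt_div_iff₀ hεpos, mul_comm]
      have : (∑' n : ℕ, P {ω | Y 0 ω / ε ∈ Set.Ioi (n : ℝ)}) < ⊤ := by
        letI : MeasureSpace Ω := ⟨P⟩
        exact ProbabilityTheory.tsum_prob_mem_Ioi_lt_top ((hYint 0).div_const ε)
          (fun ω => div_nonneg (hY0 0 ω) hεpos.le)
      simp only [hconv]
      exact this.ne
    filter_upwards [ae_eventually_notMem hfin] with ω hω
    filter_upwards [hω] with n hn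
    simpa [Set.mem_setOf_eq, not_lt] using hn
  -- a.s. convergence
  have part1 : ∀ᵐ ω ∂P, Tendsto
      (fun k : ℕ => Real.log (1 + ∑ i ∈ Finset.range k, z i ω) / k) atTop (nhds 0) := by
    rw [← ae_all_iff] at hBC
    filter_upwards [hBC] with ω hω
    apply det_as (fun n => z n ω) (fun n => hz0 n ω)
    intro ε hεpos
    obtain ⟨m, hm⟩ := exists_nat_one_div_lt hεpos
    filter_upwards [hω m] with n hn
    calc Real.log (1 + z n ω) ≤ (1 / (m + 1) : ℝ) * n := hn
      _ ≤ ε * n := by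
        apply mul_le_mul_of_nonneg_right _ (Nat.cast_nonneg n)
        push_cast at hm ⊢
        linarith
  refine ⟨part1, ?_, ?_⟩
  -- integrability
  · intro k
    have hSm : Measurable (fun ω => Real.log (1 + ∑ i ∈ Finset.range k, z i ω)) := by
      apply Real.measurable_log.comp
      exact measurable_const.add (Finset.measurable_sum _ fun i _ => hzm i)
    have hgint : Integrable (fun ω => Real.log (k + 1) + ∑ i ∈ Finset.range k, Y i ω) P :=
      (integrable_const _).add (integrable_finset_sum _ fun i _ => hYint i)
    have hbnd : ∀ ω, ‖Real.log (1 + ∑ i ∈ Finset.range k, z i ω)‖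
        ≤ Real.log (k + 1) + ∑ i ∈ Finset.range k, Y i ω := by
      intro ω
      have hS0 : 0 ≤ ∑ i ∈ Finset.range k, z i ω :=
        Finset.sum_nonneg fun i _ => hz0 i ω
      have h1 : 0 ≤ Real.log (1 + ∑ i ∈ Finset.range k, z i ω) :=
        Real.log_nonneg (by linarith)
      rw [Real.norm_eq_abs, abs_of_nonneg h1]
      have := key_ineq (fun i => z i ω) (fun i => hz0 i ω) k 0 le_rfl
      refine this.trans_eq ?_
      simp only [sub_zero, add_zero]
      congr 1
      exact Finset.sum_congr rfl fun i _ => max_eq_left (hY0 i ω)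
    exact ((hgint.mono' hSm.aestronglyMeasurable
      (Filter.Eventually.of_forall hbnd)).div_const _)
  -- L¹ convergence
  · have hfint : ∀ k : ℕ, Integrable
        (fun ω => Real.log (1 + ∑ i ∈ Finset.range k, z i ω)) P := by
      intro k
      have hSm : Measurable (fun ω => Real.log (1 + ∑ i ∈ Finset.range k, z i ω)) := by
        apply Real.measurable_log.comp
        exact measurable_const.add (Finset.measurable_sum _ fun i _ => hzm i)
      have hgint : Integrable (fun ω => Real.log (k + 1) + ∑ i ∈ Finset.range k, Y i ω) P :=
        (integrable_const _).add (integrable_finset_sum _ fun i _ => hYint i)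
      refine hgint.mono' hSm.aestronglyMeasurable (Filter.Eventually.of_forall fun ω => ?_)
      have hS0 : 0 ≤ ∑ i ∈ Finset.range k, z i ω := Finset.sum_nonneg fun i _ => hz0 i ω
      have h1 : 0 ≤ Real.log (1 + ∑ i ∈ Finset.range k, z i ω) := Real.log_nonneg (by linarith)
      rw [Real.norm_eq_abs, abs_of_nonneg h1]
      have := key_ineq (fun i => z i ω) (fun i => hz0 i ω) k 0 le_rfl
      refine this.trans_eq ?_
      simp only [sub_zero, add_zero]
      congr 1
      exact Finset.sum_congr rfl fun i _ => max_eq_left (hY0 i ω)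
    -- truncated expectations
    have htmeas : ∀ (C : ℝ) (j : ℕ), Measurable (fun ω => max (Y j ω - C) 0) :=
      fun C j => ((hYm j).sub measurable_const).max measurable_const
    have htint : ∀ (C : ℝ), 0 ≤ C → ∀ j, Integrable (fun ω => max (Y j ω - C) 0) P := by
      intro C hC j
      refine (hYint j).mono' (htmeas C j).aestronglyMeasurable
        (Filter.Eventually.of_forall fun ω => ?_)
      rw [Real.norm_eq_abs, abs_of_nonneg (le_max_right _ _)]
      exact max_le (by linarith [hY0 j ω]) (hY0 j ω)
    have hteq : ∀ (C : ℝ) (j : ℕ),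
        ∫ ω, max (Y j ω - C) 0 ∂P = ∫ ω, max (Y 0 ω - C) 0 ∂P := by
      intro C j
      have hg : Measurable (fun x : ℝ => max (x - C) 0) :=
        (measurable_id.sub measurable_const).max measurable_const
      have e1 : ∫ ω, max (Y j ω - C) 0 ∂P
          = ∫ x, max (x - C) 0 ∂(Measure.map (Y j) P) :=
        (integral_map (hYm j).aemeasurable hg.aestronglyMeasurable).symm
      have e2 : ∫ ω, max (Y 0 ω - C) 0 ∂P
          = ∫ x, max (x - C) 0 ∂(Measure.map (Y 0) P) :=
        (integral_map (hYm 0).aemeasurable hg.aestronglyMeasurable).symm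
      rw [e1, e2, hYmap j]
    have htrunc : Tendsto (fun M : ℕ => ∫ ω, max (Y 0 ω - M) 0 ∂P) atTop (nhds 0) := by
      have main := tendsto_integral_of_dominated_convergence
        (F := fun (M : ℕ) (ω : Ω) => max (Y 0 ω - M) 0) (f := fun _ : Ω => (0:ℝ))
        (bound := fun ω => Y 0 ω) (μ := P)
        (fun M => (htmeas (M:ℝ) 0).aestronglyMeasurable) (hYint 0)
        (fun M => Filter.Eventually.of_forall fun ω => by
          rw [Real.norm_eq_abs, abs_of_nonneg (le_max_right _ _)]
          exact max_le (by linarith [hY0 0 ω, Nat.cast_nonneg (α := ℝ) M]) (hY0 0 ω))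
        (Filter.Eventually.of_forall fun ω => by
          apply Tendsto.congr' _ (tendsto_const_nhds (x := (0:ℝ)))
          filter_upwards [eventually_ge_atTop ⌈Y 0 ω⌉₊] with M hM
          have : Y 0 ω ≤ (M:ℝ) := le_trans (Nat.le_ceil _) (by exact_mod_cast hM)
          rw [max_eq_right (by linarith)])
      simpa using main
    rw [NormedAddCommGroup.tendsto_nhds_zero]
    intro ε hε
    obtain ⟨M, hM⟩ := (htrunc.eventually_lt_const (show (0:ℝ) < ε/2 by linarith)).exists
    have hA : Tendsto (fun k : ℕ => (Real.log (1 + k) + M) / k) atTop (nhds 0) := by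
      have h1 := tendsto_log_add_div 1
      have h2 : Tendsto (fun k : ℕ => (M:ℝ) / k) atTop (nhds 0) :=
        tendsto_const_div_atTop_nhds_zero_nat _
      have := h1.add h2
      rw [add_zero] at this
      exact this.congr fun k => by rw [← add_div]
    filter_upwards [(hA.eventually_lt_const (show (0:ℝ) < ε/2 by linarith)),
      eventually_ge_atTop 1] with k hk hk1
    have hkpos : (0:ℝ) < k := by exact_mod_cast hk1
    -- rewrite the integral of the abs
    have habs : ∀ ω, |Real.log (1 + ∑ i ∈ Finset.range k, z i ω) / k|
        = Real.log (1 + ∑ i ∈ Finset.range k, z i ω) / k := by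
      intro ω
      have hS0 : 0 ≤ ∑ i ∈ Finset.range k, z i ω := Finset.sum_nonneg fun i _ => hz0 i ω
      exact abs_of_nonneg (div_nonneg (Real.log_nonneg (by linarith)) hkpos.le)
    have hinn : 0 ≤ ∫ ω, |Real.log (1 + ∑ i ∈ Finset.range k, z i ω) / k| ∂P :=
      integral_nonneg fun ω => abs_nonneg _
    rw [Real.norm_eq_abs, abs_of_nonneg hinn]
    calc ∫ ω, |Real.log (1 + ∑ i ∈ Finset.range k, z i ω) / k| ∂P
        = ∫ ω, Real.log (1 + ∑ i ∈ Finset.range k, z i ω) / k ∂P := by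
          exact integral_congr_ae (Filter.Eventually.of_forall habs)
      _ = (∫ ω, Real.log (1 + ∑ i ∈ Finset.range k, z i ω) ∂P) / k := integral_div _ _
      _ ≤ (Real.log (k + 1) + M + ∑ i ∈ Finset.range k,
            ∫ ω, max (Y i ω - M) 0 ∂P) / k := by
          gcongr ?_ / _
          have hgint : Integrable (fun ω => (Real.log (k + 1) + (M:ℝ))
              + ∑ i ∈ Finset.range k, max (Y i ω - M) 0) P :=
            (integrable_const _).add
              (integrable_finset_sum _ fun i _ => htint M (Nat.cast_nonneg M) i)
          have hmono := integral_mono (hfint k) hgint (fun ω => by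
            have := key_ineq (fun i => z i ω) (fun i => hz0 i ω) k (M:ℝ) (Nat.cast_nonneg M)
            simpa [add_assoc] using this)
          rw [integral_add (integrable_const _)
              (integrable_finset_sum _ fun i _ => htint M (Nat.cast_nonneg M) i),
            integral_finset_sum _ (fun i _ => htint M (Nat.cast_nonneg M) i),
            integral_const] at hmono
          simp only [probReal_univ, one_smul] at hmono
          linarith [hmono]
      _ = (Real.log (k + 1) + M) / k + ∫ ω, max (Y 0 ω - M) 0 ∂P := by
          have : ∑ i ∈ Finset.range k, ∫ ω, max (Y i ω - M) 0 ∂P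
              = k * ∫ ω, max (Y 0 ω - M) 0 ∂P := by
            rw [Finset.sum_congr rfl (fun i _ => hteq (M:ℝ) i)]
            simp [mul_comm]
          rw [this, add_div, mul_div_cancel_left₀ _ hkpos.ne']
      _ < ε / 2 + ε / 2 := by
          apply add_lt_add _ hM
          have : Real.log (k + 1) = Real.log (1 + k) := by rw [add_comm]
          rw [this]; exact hk
      _ = ε := by ring

end Stmt6
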